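/- Let 1 ≤ k ≤ N and let Λ be either Λᵃ(kπh) or Λᵒ(kπh), with φ the corresponding eigenvector (φ_j = sin(kπx_j), φ_{j+1/2} = ((40+Λ)/(8(10−Λ)))·(φ_j + φ_{j+1})). Then the boundary observability identity ‖φ‖²_{h,1} = (1/W(Λ))·(φ_N/h)² holds, i.e. W(Λ)·‖φ‖²_{h,1} = sin²(kπNh)/h². -/

import Mathlib

open Real Finset

noncomputable def Delta (η : ℝ) : ℝ :=
  1 + 268 * Real.cos (η / 2) ^ 2 - 44 * Real.cos (η / 2) ^ 4

noncomputable def Lama (η : ℝ) : ℝ :=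
  120 * Real.sin (η / 2) ^ 2 / (11 + 4 * Real.cos (η / 2) ^ 2 + Real.sqrt (Delta η))

noncomputable def Lamo (η : ℝ) : ℝ :=
  (22 + 8 * Real.cos (η / 2) ^ 2 + 2 * Real.sqrt (Delta η)) / (1 + Real.sin (η / 2) ^ 2)

noncomputable def W (Λ : ℝ) : ℝ :=
  24 * (Λ - 10) ^ 2 * (Λ - 12) * (Λ - 60) /
    ((-19 * Λ ^ 2 - 120 * Λ + 3600) * (Λ ^ 2 + 16 * Λ + 240))

/-- Discrete H¹-seminorm squared of a P2 vector with nodal components `f`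
and midpoint components `g`. -/
noncomputable def normH1sq (N : ℕ) (h : ℝ) (f g : ℕ → ℝ) : ℝ :=
  (h / 6) * ∑ j ∈ Finset.range (N + 1),
    ((-(f (j + 1) - 4 * g j + 3 * f j) / h) ^ 2
      + 4 * ((f (j + 1) - f j) / h) ^ 2
      + ((f j - 4 * g j + 3 * f (j + 1)) / h) ^ 2)

private lemma main_alg (Λ x s2 : ℝ) (h2 : (2:ℝ) - x ≠ 0) (hs : s2 = 1 - x)
    (hQ : ((2 - x) * Λ - 22 - 8 * x) ^ 2 = 4 * (1 + 268 * x - 44 * x ^ 2)) :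
    (Λ - 12) * (Λ - 60) * (25 * Λ ^ 2 * x + 12 * s2 * (10 - Λ) ^ 2)
      = s2 * x * ((-19 * Λ ^ 2 - 120 * Λ + 3600) * (Λ ^ 2 + 16 * Λ + 240)) := by
  subst hs
  refine mul_left_cancel₀ (pow_ne_zero 2 h2) ?_
  linear_combination ((3600 * x ^ 2 - 10800 * x + 7200) + (-120 * x ^ 2 + 660 * x - 840) * Λ
      + (-19 * x ^ 2 + 32 * x + 12) * Λ ^ 2) * hQ

set_option maxHeartbeats 1600000 in
theorem stmt_9 (N : ℕ) (hN : 1 ≤ N) (h : ℝ) (hh : h = 1 / ((N : ℝ) + 1))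
    (k : ℕ) (hk1 : 1 ≤ k) (hkN : k ≤ N)
    (Λ : ℝ) (hΛ : Λ = Lama ((k : ℝ) * Real.pi * h) ∨ Λ = Lamo ((k : ℝ) * Real.pi * h))
    (φ : ℕ → ℝ) (hφ : ∀ j : ℕ, φ j = Real.sin ((k : ℝ) * Real.pi * ((j : ℝ) * h)))
    (ψ : ℕ → ℝ)
    (hψ : ∀ j : ℕ, ψ j = (40 + Λ) / (8 * (10 - Λ)) * (φ j + φ (j + 1))) :
    W Λ * normH1sq N h φ ψ = Real.sin ((k : ℝ) * Real.pi * (N : ℝ) * h) ^ 2 / h ^ 2 := by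
  have hπ := Real.pi_pos
  have hNpos : (0:ℝ) < (N:ℝ) + 1 := by positivity
  have hhpos : 0 < h := by rw [hh]; positivity
  have hhne : h ≠ 0 := ne_of_gt hhpos
  have hNh : ((N:ℝ) + 1) * h = 1 := by rw [hh]; field_simp
  set η : ℝ := (k:ℝ) * Real.pi * h with hηdef
  have hk1' : (1:ℝ) ≤ (k:ℝ) := by exact_mod_cast hk1
  have hkN' : (k:ℝ) ≤ (N:ℝ) := by exact_mod_cast hkN
  have hηpos : 0 < η := by
    have : 0 < (k:ℝ) := by linarith
    positivity
  have hkh : (k:ℝ) * h < 1 := by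
    have h1 : (k:ℝ) < (N:ℝ) + 1 := by linarith
    calc (k:ℝ) * h < ((N:ℝ)+1) * h := by
          exact mul_lt_mul_of_pos_right h1 hhpos
      _ = 1 := hNh
  have hηlt : η < Real.pi := by
    have : η = ((k:ℝ)*h) * Real.pi := by rw [hηdef]; ring
    rw [this]
    nlinarith
  set c : ℝ := Real.cos (η/2) with hcdef
  set s : ℝ := Real.sin (η/2) with hsdef
  have hc1 : s^2 + c^2 = 1 := Real.sin_sq_add_cos_sq _
  have hspos : 0 < s := by
    apply Real.sin_pos_of_pos_of_lt_pi <;> [linarith; linarith]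
  have hcpos : 0 < c := by
    apply Real.cos_pos_of_mem_Ioo
    constructor <;> [linarith; linarith]
  have hc2pos : 0 < c^2 := by positivity
  have hc2lt : c^2 < 1 := by nlinarith
  have h2c : (2:ℝ) - c^2 ≠ 0 := by nlinarith
  have hs2 : s^2 = 1 - c^2 := by linarith
  -- square root facts
  have h2cpos : (0:ℝ) < 2 - c^2 := by nlinarith
  have hΔ : Delta η = 1 + 268*c^2 - 44*c^4 := by
    rw [Delta, ← hcdef]
  set r : ℝ := Real.sqrt (Delta η) with hrdef
  have hΔnn : 0 ≤ Delta η := by rw [hΔ]; nlinarith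
  have hr2 : r^2 = 1 + 268*c^2 - 44*c^4 := by
    rw [hrdef, Real.sq_sqrt hΔnn, hΔ]
  have hr1 : 1 ≤ r := by
    have h1 : Real.sqrt 1 ≤ Real.sqrt (Delta η) := by
      apply Real.sqrt_le_sqrt; rw [hΔ]; nlinarith
    rwa [Real.sqrt_one] at h1
  have hrpos : 0 < r := by linarith
  -- dispersion relation and bounds
  have hmain : ((2 - c^2) * Λ - 22 - 8*c^2)^2 = 4*(1 + 268*c^2 - 44*c^4) ∧
      ((0 < Λ ∧ Λ < 10) ∨ (12 < Λ ∧ Λ < 60)) := by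
    rcases hΛ with hA | hO
    · -- acoustic
      have hden : (0:ℝ) < 11 + 4*c^2 + r := by nlinarith
      have h1 : Λ * (11 + 4*c^2 + r) = 120 * s^2 := by
        rw [hA, Lama, ← hcdef, ← hsdef, ← hrdef]
        exact div_mul_cancel₀ _ (ne_of_gt hden)
      have hlin : (2 - c^2) * Λ = 22 + 8*c^2 - 2*r := by
        apply mul_right_cancel₀ (ne_of_gt hden)
        linear_combination (2 - c^2) * h1 + 120*(2 - c^2)*hs2 + 2*hr2
      have hr_gt : 1 + 9*c^2 < r := by
        have hsq : (1 + 9*c^2)^2 < r^2 := by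
          nlinarith [hr2, mul_pos hc2pos h2cpos]
        exact lt_of_pow_lt_pow_left₀ 2 (le_of_lt hrpos) hsq
      have hΛpos : 0 < Λ := by
        have he : Λ = 120*s^2/(11 + 4*c^2 + r) := by
          rw [eq_div_iff (ne_of_gt hden)]; exact h1
        rw [he]
        exact div_pos (by nlinarith) hden
      have hΛlt : Λ < 10 := by nlinarith [hlin, hr_gt, h2cpos]
      refine ⟨?_, Or.inl ⟨hΛpos, hΛlt⟩⟩
      linear_combination ((2 - c^2)*Λ - 22 - 8*c^2 - 2*r)*hlin + 4*hr2
    · -- optic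
      have hden : (0:ℝ) < 1 + s^2 := by nlinarith
      have h1 : Λ * (1 + s^2) = 22 + 8*c^2 + 2*r := by
        rw [hO, Lamo, ← hcdef, ← hsdef, ← hrdef]
        exact div_mul_cancel₀ _ (ne_of_gt hden)
      have hlin : (2 - c^2) * Λ = 22 + 8*c^2 + 2*r := by
        linear_combination h1 - Λ*hs2
      have hr_lt : r < 49 - 34*c^2 := by
        have hsq : r^2 < (49 - 34*c^2)^2 := by
          nlinarith [hr2, mul_pos (show (0:ℝ) < 1 - c^2 by nlinarith) h2cpos]
        exact lt_of_pow_lt_pow_left₀ 2 (by nlinarith) hsq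
      have hΛgt : 12 < Λ := by nlinarith [hlin, hr1, hc2pos, h2cpos]
      have hΛlt : Λ < 60 := by nlinarith [hlin, hr_lt, h2cpos]
      refine ⟨?_, Or.inr ⟨hΛgt, hΛlt⟩⟩
      linear_combination ((2 - c^2)*Λ - 22 - 8*c^2 + 2*r)*hlin + 4*hr2
  obtain ⟨hQ, hB⟩ := hmain
  have h10 : (10:ℝ) - Λ ≠ 0 := by
    rcases hB with ⟨h1, h2⟩ | ⟨h1, h2⟩
    · exact ne_of_gt (by linarith)
    · exact ne_of_lt (by linarith)
  have hD1 : (-19*Λ^2 - 120*Λ + 3600) ≠ 0 := by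
    rcases hB with ⟨h1, h2⟩ | ⟨h1, h2⟩
    · exact ne_of_gt (by nlinarith)
    · exact ne_of_lt (by nlinarith)
  have hD2 : (Λ^2 + 16*Λ + 240) ≠ 0 := by
    exact ne_of_gt (by nlinarith [sq_nonneg (Λ + 8)])
  have halg : (Λ - 12) * (Λ - 60) * (25 * Λ ^ 2 * c^2 + 12 * s^2 * (10 - Λ) ^ 2)
      = s^2 * c^2 * ((-19 * Λ ^ 2 - 120 * Λ + 3600) * (Λ ^ 2 + 16 * Λ + 240)) := by
    apply main_alg Λ (c^2) (s^2) h2c hs2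
    linear_combination hQ
  -- abbreviation for the midpoint coefficient
  set α : ℝ := (40 + Λ) / (8 * (10 - Λ)) with hαdef
  have h8 : (8:ℝ) * (10 - Λ) ≠ 0 := mul_ne_zero (by norm_num) h10
  have hβ : (2 - 4*α)^2 * (4*(10 - Λ)^2) = 25*Λ^2 := by
    have e1 : (2 - 4*α) * (2*(10 - Λ)) = -5*Λ := by
      rw [hαdef]; field_simp; ring
    linear_combination ((2 - 4*α)*(2*(10 - Λ)) - 5*Λ) * e1
  -- key identity for W
  have hkey : W Λ * (4*(2 - 4*α)^2*c^2 + 12*s^2) = 24*s^2*c^2 := by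
    rw [W, div_mul_eq_mul_div, div_eq_iff (mul_ne_zero hD1 hD2)]
    apply mul_left_cancel₀ (show (4*(10 - Λ)^2 : ℝ) ≠ 0 by positivity)
    linear_combination (4*c^2*(24*(Λ - 10)^2*(Λ - 12)*(Λ - 60))) * hβ
      + (96*(Λ - 10)^2) * halg
  -- trigonometric part
  have hφ' : ∀ j : ℕ, φ j = Real.sin ((j:ℝ) * η) := by
    intro j
    rw [hφ j]; congr 1; rw [hηdef]; ring
  have hpyη : ∀ θ : ℝ, Real.sin θ ^ 2 + Real.cos θ ^ 2 = 1 := fun θ => Real.sin_sq_add_cos_sq θ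
  have hterm : ∀ j : ℕ,
      ((-(φ (j + 1) - 4 * ψ j + 3 * φ j) / h) ^ 2
        + 4 * ((φ (j + 1) - φ j) / h) ^ 2
        + ((φ j - 4 * ψ j + 3 * φ (j + 1)) / h) ^ 2)
      = ((4*(2 - 4*α)^2*c^2 + 12*s^2)
          + (12*s^2 - 4*(2 - 4*α)^2*c^2) * Real.cos ((2*(j:ℝ)+1)*η)) / h^2 := by
    intro j
    have e0 : φ j = Real.sin ((j:ℝ)*η) := hφ' j
    have e1 : φ (j+1) = Real.sin ((j:ℝ)*η + η) := by
      rw [hφ' (j+1)]; congr 1; push_cast; ring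
    have s0 : Real.sin ((j:ℝ)*η + η/2) * c - Real.cos ((j:ℝ)*η + η/2) * s
        = Real.sin ((j:ℝ)*η) := by
      rw [hcdef, hsdef, Real.sin_add, Real.cos_add]
      linear_combination Real.sin ((j:ℝ)*η) * hpyη (η/2)
    have s1 : Real.sin ((j:ℝ)*η + η/2) * c + Real.cos ((j:ℝ)*η + η/2) * s
        = Real.sin ((j:ℝ)*η + η) := by
      have e2 := Real.sin_two_mul (η/2)
      rw [show 2*(η/2) = η from by ring] at e2
      have e3 := Real.cos_two_mul (η/2)
      rw [show 2*(η/2) = η from by ring] at e3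
      rw [hcdef, hsdef, Real.sin_add ((j:ℝ)*η) (η/2), Real.cos_add ((j:ℝ)*η) (η/2),
        Real.sin_add ((j:ℝ)*η) η, e2, e3]
      linear_combination (-(Real.sin ((j:ℝ)*η))) * hpyη (η/2)
    have c2 : Real.cos ((2*(j:ℝ)+1)*η) = 2 * Real.cos ((j:ℝ)*η + η/2)^2 - 1 := by
      rw [show (2*(j:ℝ)+1)*η = 2*((j:ℝ)*η + η/2) from by ring, Real.cos_two_mul]
    rw [hψ j, e0, e1, ← s0, ← s1, c2]
    linear_combination (8*(2 - 4*α)^2*c^2/h^2) * hpyη ((j:ℝ)*η + η/2)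
  have hsη : Real.sin η ≠ 0 := ne_of_gt (Real.sin_pos_of_pos_of_lt_pi hηpos hηlt)
  have hcos_sum : ∑ j ∈ Finset.range (N+1), Real.cos ((2*(j:ℝ)+1)*η) = 0 := by
    have tele : ∀ j : ℕ, Real.cos ((2*(j:ℝ)+1)*η)
        = (Real.sin (2*((j:ℝ)+1)*η) - Real.sin (2*(j:ℝ)*η)) / (2*Real.sin η) := by
      intro j
      rw [eq_div_iff (mul_ne_zero two_ne_zero hsη)]
      rw [show 2*((j:ℝ)+1)*η = (2*(j:ℝ)+1)*η + η from by ring,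
        show 2*(j:ℝ)*η = (2*(j:ℝ)+1)*η - η from by ring,
        Real.sin_add, Real.sin_sub]
      ring
    rw [Finset.sum_congr rfl (fun j _ => tele j), ← Finset.sum_div]
    have htel : ∑ j ∈ Finset.range (N+1),
        (Real.sin (2*((j:ℝ)+1)*η) - Real.sin (2*(j:ℝ)*η))
        = Real.sin (2*((N:ℝ)+1)*η) - Real.sin (2*(0:ℝ)*η) := by
      have h1 := Finset.sum_range_sub (f := fun n : ℕ => Real.sin (2*(n:ℝ)*η)) (N+1)
      push_cast at h1 ⊢
      convert h1 using 2
    rw [htel]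
    have h2kπ : 2*((N:ℝ)+1)*η = (2*k : ℕ) * Real.pi := by
      push_cast
      rw [hηdef]
      linear_combination 2*(k:ℝ)*Real.pi*hNh
    rw [h2kπ, Real.sin_nat_mul_pi]
    norm_num
  -- total sum
  have hsum : ∑ j ∈ Finset.range (N+1),
      ((-(φ (j + 1) - 4 * ψ j + 3 * φ j) / h) ^ 2
        + 4 * ((φ (j + 1) - φ j) / h) ^ 2
        + ((φ j - 4 * ψ j + 3 * φ (j + 1)) / h) ^ 2)
      = ((N:ℝ)+1) * (4*(2 - 4*α)^2*c^2 + 12*s^2) / h^2 := by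
    rw [Finset.sum_congr rfl (fun j _ => hterm j), ← Finset.sum_div]
    congr 1
    rw [Finset.sum_add_distrib, Finset.sum_const, ← Finset.mul_sum, hcos_sum,
      mul_zero, add_zero, nsmul_eq_mul, Finset.card_range]
    push_cast
    ring
  have hnorm : normH1sq N h φ ψ = (4*(2 - 4*α)^2*c^2 + 12*s^2) / (6*h^2) := by
    rw [normH1sq, hsum,
      show (h/6) * (((N:ℝ)+1) * (4*(2 - 4*α)^2*c^2 + 12*s^2) / h^2)
        = (((N:ℝ)+1)*h) * ((4*(2 - 4*α)^2*c^2 + 12*s^2) / (6*h^2)) from by ring,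
      hNh, one_mul]
  -- right-hand side
  have hsinη : Real.sin η = 2*s*c := by
    rw [show η = 2*(η/2) from by ring, Real.sin_two_mul, ← hsdef, ← hcdef]
  have hrhs : Real.sin ((k:ℝ)*Real.pi*(N:ℝ)*h) ^ 2 = 4*s^2*c^2 := by
    have e : (k:ℝ)*Real.pi*(N:ℝ)*h = (k:ℝ)*Real.pi - η := by
      rw [hηdef]
      linear_combination (k:ℝ)*Real.pi*hNh
    rw [e, Real.sin_sub, Real.sin_nat_mul_pi]
    have hck : Real.cos ((k:ℝ)*Real.pi) ^ 2 = 1 := by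
      have h1 := Real.sin_sq_add_cos_sq ((k:ℝ)*Real.pi)
      rw [Real.sin_nat_mul_pi] at h1
      linarith [h1]
    linear_combination (Real.cos ((k:ℝ)*Real.pi))^2 * (Real.sin η + 2*s*c) * hsinη
      + 4*s^2*c^2 * hck
  rw [hnorm, hrhs]
  rw [show W Λ * ((4*(2 - 4*α)^2*c^2 + 12*s^2) / (6*h^2))
      = (W Λ * (4*(2 - 4*α)^2*c^2 + 12*s^2)) / (6*h^2) from by ring, hkey]
  field_simp
  ring
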